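/- Let R be an m × n real matrix and P an m × m real matrix, both with non-negative entries, with P strictly lower triangular (P_{ij} = 0 for j ≥ i) and with Σ_j R_{ij} + Σ_j P_{ij} = 1 for every row i. Let r > 0 and suppose F : E → E satisfies the forward-Euler condition with step bound h_FE > 0. Let x_1, …, x_n ∈ E, let Δt satisfy 0 ≤ Δt ≤ r h_FE, and let w_1, …, w_m ∈ E satisfy the stage equations w_i = Σ_j R_{ij} • x_j + Σ_{j<i} P_{ij} • (w_j + (Δt/r) • F(w_j)) for all i. Then f(w_i) ≤ max_{1 ≤ j ≤ n} f(x_j) for every i = 1, …, m. -/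

import Mathlib

/-- **Strong stability of methods in convex-combination form.**
If `R` and `P` are entrywise non-negative, `P` is strictly lower triangular,
each row of `[R P]` sums to one, `F` satisfies the forward-Euler condition with
step bound `hFE > 0`, `r > 0`, and `0 ≤ Δt ≤ r * hFE`, then every stage `w i`
of the convex-combination form satisfies `f (w i) ≤ max_j f (x j)`. -/
theorem ssp_convexCombination_form
    {E : Type*} [NormedAddCommGroup E] [NormedSpace ℝ E] [FiniteDimensional ℝ E]
    (f : E → ℝ) (hf_cont : Continuous f) (hf_conv : ConvexOn ℝ Set.univ f)
    (F : E → E)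
    (hFE : ℝ) (hFE_pos : 0 < hFE)
    (hF : ∀ u : E, ∀ τ : ℝ, 0 ≤ τ → τ ≤ hFE → f (u + τ • F u) ≤ f u)
    {m n : ℕ} (hn : 0 < n)
    (R : Matrix (Fin m) (Fin n) ℝ) (P : Matrix (Fin m) (Fin m) ℝ)
    (hR_nonneg : ∀ i j, 0 ≤ R i j) (hP_nonneg : ∀ i j, 0 ≤ P i j)
    (hP_lower : ∀ i j, i ≤ j → P i j = 0)
    (hrowsum : ∀ i, (∑ j, R i j) + (∑ j, P i j) = 1)
    (r : ℝ) (hr : 0 < r)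
    (x : Fin n → E) (Δt : ℝ) (hΔt_nonneg : 0 ≤ Δt) (hΔt : Δt ≤ r * hFE)
    (w : Fin m → E)
    (hw : ∀ i, w i = (∑ j, R i j • x j) +
      ∑ j ∈ Finset.univ.filter (fun j => j < i),
        P i j • (w j + (Δt / r) • F (w j))) :
    ∀ i, f (w i) ≤ Finset.univ.sup'
      (have : Nonempty (Fin n) := Fin.pos_iff_nonempty.mp hn; Finset.univ_nonempty)
      (fun j => f (x j)) := by

  have hne : Nonempty (Fin n) := Fin.pos_iff_nonempty.mp hn
  set M : ℝ := Finset.univ.sup'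
      (have : Nonempty (Fin n) := Fin.pos_iff_nonempty.mp hn; Finset.univ_nonempty)
      (fun j => f (x j)) with hMdef
  have hxM : ∀ j, f (x j) ≤ M := fun j => Finset.le_sup' (fun j => f (x j)) (Finset.mem_univ j)
  have hτ0 : 0 ≤ Δt / r := div_nonneg hΔt_nonneg hr.le
  have hτ1 : Δt / r ≤ hFE := by
    rw [div_le_iff₀ hr]; linarith [hΔt]
  suffices key : ∀ N : ℕ, ∀ i : Fin m, i.val < N → f (w i) ≤ M by
    intro i; exact key (i.val + 1) i (Nat.lt_succ_self _)
  intro N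
  induction N with
  | zero => intro i h; omega
  | succ N ihN =>
  intro i hiN
  have ih : ∀ j : Fin m, j < i → f (w j) ≤ M := fun j hji =>
    ihN j (by have := Fin.lt_iff_val_lt_val.mp hji; omega)
  -- combine the two sums into one convex combination
  have hfull : w i = ∑ k : Fin n ⊕ Fin m,
      (Sum.elim (fun j => R i j) (fun j => P i j) k) •
      (Sum.elim (fun j => x j) (fun j => w j + (Δt / r) • F (w j)) k) := by
    rw [hw i, Fintype.sum_sum_type]
    simp only [Sum.elim_inl, Sum.elim_inr]
    congr 1
    refine Finset.sum_subset (Finset.filter_subset _ _)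
      (fun j _ hj => ?_)
    simp only [Finset.mem_filter, Finset.mem_univ, true_and] at hj
    rw [hP_lower i j (le_of_not_gt hj), zero_smul]
  set c : Fin n ⊕ Fin m → ℝ := Sum.elim (fun j => R i j) (fun j => P i j)
  set v : Fin n ⊕ Fin m → E :=
    Sum.elim (fun j => x j) (fun j => w j + (Δt / r) • F (w j))
  have hc0 : ∀ k ∈ Finset.univ, (0:ℝ) ≤ c k := by
    rintro (j|j) _
    · exact hR_nonneg i j
    · exact hP_nonneg i j
  have hc1 : ∑ k, c k = 1 := by
    rw [Fintype.sum_sum_type]; exact hrowsum i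
  have hmem : ∀ k ∈ Finset.univ, v k ∈ (Set.univ : Set E) := fun _ _ => trivial
  have h1 : f (w i) ≤ ∑ k, c k * f (v k) := by
    rw [hfull]
    exact hf_conv.map_sum_le hc0 hc1 hmem
  have h2 : ∑ k, c k * f (v k) ≤ ∑ k, c k * M := by
    refine Finset.sum_le_sum ?_
    rintro (j|j) _
    · exact mul_le_mul_of_nonneg_left (hxM j) (hR_nonneg i j)
    · rcases lt_or_ge j i with hji | hij
      · exact mul_le_mul_of_nonneg_left
          (le_trans (hF (w j) (Δt / r) hτ0 hτ1) (ih j hji)) (hP_nonneg i j)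
      · simp [c, hP_lower i j hij]
  calc f (w i) ≤ ∑ k, c k * f (v k) := h1
    _ ≤ ∑ k, c k * M := h2
    _ = M := by rw [← Finset.sum_mul, hc1, one_mul]
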